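/- Let a, b, c, d be positive integers with b ≥ 2, c ≥ 2 and bc > ad. If (i, j) ∈ ℕ² satisfies b·i + a·j > b·(a−1) + a·(d−1), then the monomial x^i y^j belongs to the ideal of ℂ[[x,y]] generated by x^a + y^b and x^c + y^d. -/
import Mathlib
open MvPowerSeries

theorem stmt_3 (a b c d : ℕ) (ha : 0 < a) (hd : 0 < d) (hb : 2 ≤ b) (hc : 2 ≤ c)
    (h : a * d < b * c) (i j : ℕ) (hw : b * (a - 1) + a * (d - 1) < b * i + a * j) :
    (X 0 : MvPowerSeries (Fin 2) ℂ) ^ i * X 1 ^ j ∈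
      Ideal.span ({X 0 ^ a + X 1 ^ b, X 0 ^ c + X 1 ^ d} :
        Set (MvPowerSeries (Fin 2) ℂ)) := by
  set I : Ideal (MvPowerSeries (Fin 2) ℂ) :=
    Ideal.span ({X 0 ^ a + X 1 ^ b, X 0 ^ c + X 1 ^ d}) with hI
  have hS : (X 0 : MvPowerSeries (Fin 2) ℂ) ^ a + X 1 ^ b ∈ I :=
    Ideal.subset_span (by left; rfl)
  have hT : (X 0 : MvPowerSeries (Fin 2) ℂ) ^ c + X 1 ^ d ∈ I :=
    Ideal.subset_span (by right; rfl)
  -- key: X0^(a*d) ∈ I and X1^(b*d) ∈ I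
  have h1 : (X 0 : MvPowerSeries (Fin 2) ℂ) ^ (a*d) - (-1)^d * X 1 ^ (b*d) ∈ I := by
    have hdvd := sub_dvd_pow_sub_pow ((X 0 : MvPowerSeries (Fin 2) ℂ) ^ a) (-(X 1 ^ b)) d
    rw [sub_neg_eq_add] at hdvd
    obtain ⟨q, hq⟩ := hdvd
    have he : (X 0 : MvPowerSeries (Fin 2) ℂ) ^ (a*d) - (-1)^d * X 1 ^ (b*d) =
        (X 0 ^ a + X 1 ^ b) * q := by
      rw [← hq, pow_mul, pow_mul, neg_pow (X 1 ^ b) d]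
    rw [he]; exact Ideal.mul_mem_right _ _ hS
  have h2 : (X 1 : MvPowerSeries (Fin 2) ℂ) ^ (b*d) - (-1)^b * X 0 ^ (b*c) ∈ I := by
    have hdvd := sub_dvd_pow_sub_pow ((X 1 : MvPowerSeries (Fin 2) ℂ) ^ d) (-(X 0 ^ c)) b
    rw [sub_neg_eq_add, add_comm] at hdvd
    obtain ⟨q, hq⟩ := hdvd
    have he : (X 1 : MvPowerSeries (Fin 2) ℂ) ^ (b*d) - (-1)^b * X 0 ^ (b*c) =
        (X 0 ^ c + X 1 ^ d) * q := by
      rw [← hq, mul_comm b d, pow_mul, mul_comm b c, pow_mul, neg_pow (X 0 ^ c) b]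
    rw [he]; exact Ideal.mul_mem_right _ _ hT
  have h3 : (X 0 : MvPowerSeries (Fin 2) ℂ) ^ (a*d) - (-1)^(d+b) * X 0 ^ (b*c) ∈ I := by
    have he : (X 0 : MvPowerSeries (Fin 2) ℂ) ^ (a*d) - (-1)^(d+b) * X 0 ^ (b*c) =
        (X 0 ^ (a*d) - (-1)^d * X 1 ^ (b*d)) + (-1)^d * (X 1 ^ (b*d) - (-1)^b * X 0 ^ (b*c)) := by
      rw [pow_add]; ring
    rw [he]; exact I.add_mem h1 (Ideal.mul_mem_left _ _ h2)
  have hXad : (X 0 : MvPowerSeries (Fin 2) ℂ) ^ (a*d) ∈ I := by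
    obtain ⟨e, he, hepos⟩ : ∃ e, b*c = e + a*d ∧ 0 < e := ⟨b*c - a*d, by omega, by omega⟩
    have hfac : (X 0 : MvPowerSeries (Fin 2) ℂ) ^ (a*d) - (-1)^(d+b) * X 0 ^ (b*c) =
        (1 - (-1)^(d+b) * X 0 ^ e) * X 0 ^ (a*d) := by
      rw [he, pow_add]; ring
    have hu : IsUnit (1 - (-1)^(d+b) * (X 0 : MvPowerSeries (Fin 2) ℂ) ^ e) := by
      rw [MvPowerSeries.isUnit_iff_constantCoeff]
      simp only [map_sub, map_one, map_mul, map_pow, constantCoeff_X]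
      rw [zero_pow (by omega : e ≠ 0)]
      simp
    rw [hfac, Ideal.unit_mul_mem_iff_mem I hu] at h3
    exact h3
  have hsq : ((-1 : MvPowerSeries (Fin 2) ℂ))^d * (-1)^d = 1 := by
    rw [← pow_add, ← two_mul, pow_mul, neg_one_sq, one_pow]
  have h4 : ((-1 : MvPowerSeries (Fin 2) ℂ))^d * X 1 ^ (b*d) ∈ I := by
    have := I.sub_mem hXad h1
    simpa using this
  have hYbd : (X 1 : MvPowerSeries (Fin 2) ℂ) ^ (b*d) ∈ I := by
    have := I.smul_mem ((-1)^d) h4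
    rwa [smul_eq_mul, ← mul_assoc, hsq, one_mul] at this
  -- terminal membership
  have hterm : ∀ i j : ℕ, (a*d ≤ i ∨ b*d ≤ j) →
      (X 0 : MvPowerSeries (Fin 2) ℂ) ^ i * X 1 ^ j ∈ I := by
    intro i j hij
    rcases hij with hi | hj
    · have he : i = (i - a*d) + a*d := by omega
      rw [he, pow_add, mul_comm ((X 0:MvPowerSeries (Fin 2) ℂ)^(i-a*d)) _, mul_assoc]
      exact Ideal.mul_mem_right _ _ hXad
    · have he : j = (j - b*d) + b*d := by omega
      rw [he, pow_add, ← mul_assoc]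
      exact Ideal.mul_mem_left _ _ hYbd
  -- main induction
  have key : ∀ m : ℕ, ∀ i j : ℕ, 2*(a*b*d) - (b*i + a*j) ≤ m →
      b * (a - 1) + a * (d - 1) < b * i + a * j →
      (X 0 : MvPowerSeries (Fin 2) ℂ) ^ i * X 1 ^ j ∈ I := by
    intro m
    induction m with
    | zero =>
      intro i j hm hw
      apply hterm
      by_contra hcon
      push_neg at hcon
      obtain ⟨hi, hj⟩ := hcon
      have e1 : b*i ≤ b*(a*d - 1) := Nat.mul_le_mul_left b (by omega)
      have e2 : a*j ≤ a*(b*d - 1) := Nat.mul_le_mul_left a (by omega)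
      have e3 : b*(a*d - 1) = b*(a*d) - b := by rw [Nat.mul_sub, mul_one]
      have e4 : a*(b*d - 1) = a*(b*d) - a := by rw [Nat.mul_sub, mul_one]
      have e5 : b*(a*d) = a*b*d := by ring
      have e6 : a*(b*d) = a*b*d := by ring
      have e7 : b ≤ b*(a*d) := Nat.le_mul_of_pos_right b (by positivity)
      have e8 : a ≤ a*(b*d) := Nat.le_mul_of_pos_right a (by positivity)
      omega
    | succ m ih =>
      intro i
      induction i using Nat.strong_induction_on with
      | _ i ih2 =>
      intro j hm hw
      by_cases hij : a*d ≤ i ∨ b*d ≤ j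
      · exact hterm i j hij
      push_neg at hij
      obtain ⟨hi, hj⟩ := hij
      have hwlt : b*i + a*j < 2*(a*b*d) := by nlinarith
      by_cases hjd : d ≤ j
      · -- move 2: replace y^d by -x^c
        have ead : a*d ≤ a*j := Nat.mul_le_mul_left a hjd
        have e1 : b*(i+c) = b*i + b*c := by ring
        have e2 : a*(j-d) = a*j - a*d := by rw [Nat.mul_sub]
        have hmem : (X 0 : MvPowerSeries (Fin 2) ℂ) ^ (i+c) * X 1 ^ (j-d) ∈ I := by
          apply ih
          · rw [e1, e2]; omega
          · rw [e1, e2]; omega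
        have hj' : j = (j - d) + d := by omega
        have hsplit : (X 0 : MvPowerSeries (Fin 2) ℂ) ^ i * X 1 ^ j =
            (X 0 ^ i * X 1 ^ (j-d)) * (X 0 ^ c + X 1 ^ d) - X 0 ^ (i+c) * X 1 ^ (j-d) := by
          rw [pow_add]
          nth_rewrite 1 [hj']
          rw [pow_add]; ring
        rw [hsplit]
        exact I.sub_mem (Ideal.mul_mem_left _ _ hT) hmem
      · -- then i ≥ a; move 1: replace x^a by -y^b
        push_neg at hjd
        have hia : a ≤ i := by
          by_contra hcon
          push_neg at hcon
          have e1 : b*i ≤ b*(a-1) := Nat.mul_le_mul_left b (by omega)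
          have e2 : a*j ≤ a*(d-1) := Nat.mul_le_mul_left a (by omega)
          omega
        have eba : b*a ≤ b*i := Nat.mul_le_mul_left b hia
        have e3 : b*(i-a) = b*i - b*a := by rw [Nat.mul_sub]
        have e4 : a*(j+b) = a*j + a*b := by ring
        have e5 : b*a = a*b := Nat.mul_comm b a
        have hmem : (X 0 : MvPowerSeries (Fin 2) ℂ) ^ (i-a) * X 1 ^ (j+b) ∈ I := by
          apply ih2 (i-a) (by omega)
          · rw [e3, e4]; omega
          · rw [e3, e4]; omega
        have hi' : i = (i - a) + a := by omega
        have hsplit : (X 0 : MvPowerSeries (Fin 2) ℂ) ^ i * X 1 ^ j =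
            (X 0 ^ (i-a) * X 1 ^ j) * (X 0 ^ a + X 1 ^ b) - X 0 ^ (i-a) * X 1 ^ (j+b) := by
          nth_rewrite 1 [hi']
          rw [pow_add, pow_add]; ring
        rw [hsplit]
        exact I.sub_mem (Ideal.mul_mem_left _ _ hS) hmem
  exact key (2*(a*b*d) - (b*i + a*j)) i j le_rfl hw
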